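/- Let G act on L(x), the rational function field of one variable over a field L, such that for each σ ∈ G, σ(L) ⊆ L and σ(x) = a_σ x + b_σ with a_σ ∈ L×, b_σ ∈ L. Then L(x)^G = L^G(z) for some z ∈ L[x]; in particular L(x)^G is a purely transcendental extension of degree 1 over L^G. -/

import Mathlib

open Polynomial

namespace Stmt17Aux

variable {L : Type*} [Field L] {G : Type*} [Group G] [MulSemiringAction G (RatFunc L)]

variable (hL : ∀ (σ : G) (c : L), ∃ c' : L, σ • (RatFunc.C c : RatFunc L) = RatFunc.C c')
variable (hX : ∀ σ : G, ∃ a b : L, a ≠ 0 ∧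
      σ • (RatFunc.X : RatFunc L) = RatFunc.C a * RatFunc.X + RatFunc.C b)

noncomputable def cfun (σ : G) (c : L) : L := (hL σ c).choose

lemma cfun_spec (σ : G) (c : L) :
    σ • (RatFunc.C c : RatFunc L) = RatFunc.C (cfun hL σ c) := (hL σ c).choose_spec

lemma C_inj : Function.Injective (RatFunc.C : L →+* RatFunc L) :=
  (RatFunc.C : L →+* RatFunc L).injective

noncomputable def cmap (σ : G) : L →+* L where
  toFun := cfun hL σ
  map_one' := by
    apply C_inj
    rw [← cfun_spec hL σ 1, map_one]
    exact smul_one σ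
  map_mul' := fun x y => by
    apply C_inj
    rw [← cfun_spec hL, map_mul, map_mul, ← cfun_spec hL, ← cfun_spec hL, smul_mul']
  map_zero' := by
    apply C_inj
    rw [← cfun_spec hL σ 0, map_zero]
    exact smul_zero σ
  map_add' := fun x y => by
    apply C_inj
    rw [← cfun_spec hL, map_add, map_add, ← cfun_spec hL, ← cfun_spec hL, smul_add]

noncomputable def afun (σ : G) : L := (hX σ).choose
noncomputable def bfun (σ : G) : L := (hX σ).choose_spec.choose

lemma afun_ne_zero (σ : G) : afun hX σ ≠ 0 := (hX σ).choose_spec.choose_spec.1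

lemma smul_X (σ : G) : σ • (RatFunc.X : RatFunc L) =
    RatFunc.C (afun hX σ) * RatFunc.X + RatFunc.C (bfun hX σ) :=
  (hX σ).choose_spec.choose_spec.2

/-- The affine polynomial `a_σ X + b_σ`. -/
noncomputable def lin (σ : G) : L[X] := C (afun hX σ) * X + C (bfun hX σ)

/-- The action of `σ` on polynomials. -/
noncomputable def phi (σ : G) : L[X] →+* L[X] :=
  Polynomial.eval₂RingHom ((Polynomial.C : L →+* L[X]).comp (cmap hL σ)) (lin hX σ)

local notation "ι" => algebraMap L[X] (RatFunc L)

lemma key (σ : G) (p : L[X]) : σ • (ι p) = ι (phi hL hX σ p) := by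
  have h : (MulSemiringAction.toRingHom G (RatFunc L) σ).comp
      (algebraMap L[X] (RatFunc L)) =
      (algebraMap L[X] (RatFunc L)).comp (phi hL hX σ) := by
    apply Polynomial.ringHom_ext
    · intro a
      simp only [RingHom.comp_apply, RatFunc.algebraMap_C, phi, coe_eval₂RingHom, eval₂_C,
        RingHom.comp_apply]
      exact cfun_spec hL σ a
    · simp only [RingHom.comp_apply, RatFunc.algebraMap_X, phi, coe_eval₂RingHom, eval₂_X,
        MulSemiringAction.toRingHom_apply, lin, map_add, map_mul, RatFunc.algebraMap_C,
        RatFunc.algebraMap_X]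
      exact smul_X hX σ
  exact congrFun (congrArg (fun f => f.toFun) h) p

lemma phi_eq_comp (σ : G) (p : L[X]) :
    phi hL hX σ p = (p.map (cmap hL σ)).comp (lin hX σ) := by
  rw [Polynomial.comp, Polynomial.eval₂_map]
  rfl

lemma natDegree_lin (σ : G) : (lin hX σ).natDegree = 1 :=
  Polynomial.natDegree_linear (afun_ne_zero hX σ)

lemma natDegree_phi (σ : G) (p : L[X]) : (phi hL hX σ p).natDegree = p.natDegree := by
  rw [phi_eq_comp, Polynomial.natDegree_comp, natDegree_lin, mul_one,
    Polynomial.natDegree_map]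

lemma phi_ne_zero (σ : G) {p : L[X]} (hp : p ≠ 0) : phi hL hX σ p ≠ 0 := by
  intro h
  have := key hL hX σ p
  rw [h, map_zero] at this
  have h2 : ι p = 0 := by
    have := congrArg (fun y => σ⁻¹ • y) this
    simpa [smul_smul] using this
  exact hp ((map_eq_zero_iff _ (IsFractionRing.injective L[X] (RatFunc L))).mp h2)

lemma degree_phi (σ : G) (p : L[X]) : (phi hL hX σ p).degree = p.degree := by
  by_cases hp : p = 0
  · simp [hp, phi]
  · rw [degree_eq_natDegree (phi_ne_zero hL hX σ hp), degree_eq_natDegree hp,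
      natDegree_phi]

/-- Invariance of a polynomial. -/
def Inv (p : L[X]) : Prop := ∀ σ : G, σ • (ι p) = ι p

lemma inv_iff_phi (p : L[X]) : Inv (G := G) p ↔ ∀ σ : G, phi hL hX σ p = p := by
  constructor
  · intro h σ
    apply IsFractionRing.injective L[X] (RatFunc L)
    rw [← key hL hX σ p]
    exact h σ
  · intro h σ
    rw [key hL hX σ p, h σ]


include hL hX in
lemma division (w p : L[X]) (hw : Inv (G := G) w) (hwd : 0 < w.natDegree)
    (hp : Inv (G := G) p) :
    ∃ g r : L[X], Inv (G := G) g ∧ Inv (G := G) r ∧ p = w * g + r ∧ r.degree < w.degree := by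
  have hw0 : w ≠ 0 := fun h => by simp [h] at hwd
  have hu0 : w.leadingCoeff ≠ 0 := leadingCoeff_ne_zero.mpr hw0
  have hmonic : Monic (w * C w.leadingCoeff⁻¹) := monic_mul_leadingCoeff_inv hw0
  set r := p %ₘ (w * C w.leadingCoeff⁻¹) with hrdef
  set g := C w.leadingCoeff⁻¹ * (p /ₘ (w * C w.leadingCoeff⁻¹)) with hgdef
  have hdiv := modByMonic_add_div p (w * C w.leadingCoeff⁻¹)
  have heq : p = w * g + r := by
    rw [hgdef, hrdef]
    conv_lhs => rw [← hdiv]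
    ring
  have hrd : r.degree < w.degree := by
    have := degree_modByMonic_lt p hmonic
    rwa [degree_mul_C (inv_ne_zero hu0)] at this
  have hwphi := (inv_iff_phi hL hX w).mp hw
  have hpphi := (inv_iff_phi hL hX p).mp hp
  have hkey : ∀ σ : G, phi hL hX σ g = g ∧ phi hL hX σ r = r := by
    intro σ
    have e2 : p = w * phi hL hX σ g + phi hL hX σ r := by
      have := congrArg (phi hL hX σ) heq
      rwa [map_add, map_mul, hwphi σ, hpphi σ] at this
    have e3 : w * (g - phi hL hX σ g) = phi hL hX σ r - r := by
      have := heq.symm.trans e2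
      ring_nf
      ring_nf at this
      linear_combination this
    have hgφ : g - phi hL hX σ g = 0 := by
      by_contra hne
      have hdlt : (phi hL hX σ r - r).degree < w.degree := by
        refine lt_of_le_of_lt (degree_sub_le _ _) ?_
        rw [degree_phi hL hX σ r]
        exact max_lt hrd hrd
      have hge : w.degree ≤ (w * (g - phi hL hX σ g)).degree := by
        rw [degree_mul]
        exact le_add_of_nonneg_right (zero_le_degree_iff.mpr hne)
      rw [e3] at hge
      exact absurd (lt_of_le_of_lt hge hdlt) (lt_irrefl _)
    have hg' : phi hL hX σ g = g := by
      have := sub_eq_zero.mp hgφ; exact this.symm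
    refine ⟨hg', ?_⟩
    have : phi hL hX σ r - r = 0 := by rw [← e3, hgφ, mul_zero]
    exact sub_eq_zero.mp this
  exact ⟨g, r, (inv_iff_phi hL hX g).mpr (fun σ => (hkey σ).1),
    (inv_iff_phi hL hX r).mpr (fun σ => (hkey σ).2), heq, hrd⟩

lemma smul_prod_smul [Fintype G] (σ : G) (y : RatFunc L) :
    σ • (∏ τ : G, τ • y) = ∏ τ : G, τ • y := by
  have h1 : σ • (∏ τ : G, τ • y) = ∏ τ : G, (σ * τ) • y := by
    rw [show σ • (∏ τ : G, τ • y) =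
        MulSemiringAction.toRingHom G (RatFunc L) σ (∏ τ : G, τ • y) from rfl,
      map_prod]
    exact Finset.prod_congr rfl fun τ _ => (smul_smul σ τ y)
  rw [h1]
  exact Fintype.prod_equiv (Equiv.mulLeft σ) _ _ (fun τ => by simp [Equiv.mulLeft])

include hL hX in
lemma exists_inv_posdeg [Fintype G] :
    ∃ p : L[X], Inv (G := G) p ∧ 0 < p.natDegree := by
  refine ⟨∏ τ : G, phi hL hX τ X, ?_, ?_⟩
  · intro σ
    have hι : (algebraMap L[X] (RatFunc L)) (∏ τ : G, phi hL hX τ X) =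
        ∏ τ : G, τ • (RatFunc.X : RatFunc L) := by
      rw [map_prod]
      exact Finset.prod_congr rfl fun τ _ => by
        rw [← key hL hX τ X, RatFunc.algebraMap_X]
    rw [hι]
    exact smul_prod_smul σ _
  · have h0 : ∀ τ : G, (phi hL hX τ X : L[X]) ≠ 0 := by
      intro τ h
      have := natDegree_phi hL hX τ (X : L[X])
      rw [h] at this
      simp at this
    rw [natDegree_prod _ _ (fun τ _ => h0 τ)]
    have : ∀ τ : G, (phi hL hX τ (X : L[X])).natDegree = 1 := fun τ => by
      rw [natDegree_phi, natDegree_X]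
    rw [Finset.sum_congr rfl (fun τ _ => this τ)]
    simp [Finset.card_univ, Fintype.card_pos]

end Stmt17Aux

open Stmt17Aux in
theorem stmt_17 (L : Type*) [Field L] (G : Type*) [Group G] [Finite G]
    [MulSemiringAction G (RatFunc L)]
    (hL : ∀ (σ : G) (c : L), ∃ c' : L, σ • (RatFunc.C c : RatFunc L) = RatFunc.C c')
    (hX : ∀ σ : G, ∃ a b : L, a ≠ 0 ∧
      σ • (RatFunc.X : RatFunc L) = RatFunc.C a * RatFunc.X + RatFunc.C b) :
    ∃ q : Polynomial L,
      FixedPoints.subfield G (RatFunc L) =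
        Subfield.closure
          ((Set.range (RatFunc.C : L →+* RatFunc L) ∩
              (FixedPoints.subfield G (RatFunc L) : Set (RatFunc L))) ∪
            {algebraMap (Polynomial L) (RatFunc L) q}) := by
  classical
  have : Fintype G := Fintype.ofFinite G
  have hmemF : ∀ y : RatFunc L,
      y ∈ FixedPoints.subfield G (RatFunc L) ↔ ∀ σ : G, σ • y = y := by
    intro y; exact Iff.rfl
  -- existence of an invariant polynomial of minimal positive degree
  have hex : ∃ n : ℕ, ∃ p : Polynomial L,
      Stmt17Aux.Inv (G := G) p ∧ p.natDegree = n ∧ 0 < n := by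
    obtain ⟨p, h1, h2⟩ := exists_inv_posdeg hL hX
    exact ⟨p.natDegree, p, h1, rfl, h2⟩
  set d := Nat.find hex with hddef
  obtain ⟨w, hwInv, hwdeg, hd0⟩ := Nat.find_spec hex
  have hmin : ∀ p : Polynomial L, Stmt17Aux.Inv (G := G) p → 0 < p.natDegree →
      d ≤ p.natDegree := fun p h1 h2 => Nat.find_le ⟨p, h1, rfl, h2⟩
  refine ⟨w, ?_⟩
  set ι := algebraMap (Polynomial L) (RatFunc L) with hidef
  set K := Subfield.closure
      ((Set.range (RatFunc.C : L →+* RatFunc L) ∩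
          (FixedPoints.subfield G (RatFunc L) : Set (RatFunc L))) ∪
        {ι w}) with hKdef
  -- invariant polynomials of degree < d are constants, hence in K
  have hconst : ∀ r : Polynomial L, Stmt17Aux.Inv (G := G) r → r.natDegree < d →
      ι r ∈ K := by
    intro r hr hlt
    have h0 : r.natDegree = 0 := by
      by_contra h
      exact absurd (hmin r hr (Nat.pos_of_ne_zero h)) (not_le.mpr hlt)
    obtain ⟨c, hc⟩ := Polynomial.natDegree_eq_zero.mp h0
    have : ι r = RatFunc.C c := by rw [← hc, hidef, RatFunc.algebraMap_C]
    rw [this]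
    apply Subfield.subset_closure
    refine Or.inl ⟨⟨c, rfl⟩, ?_⟩
    rw [← this, SetLike.mem_coe, hmemF]
    exact hr
  -- every invariant polynomial is in K
  have hgen : ∀ n : ℕ, ∀ p : Polynomial L, Stmt17Aux.Inv (G := G) p →
      p.natDegree ≤ n → ι p ∈ K := by
    intro n
    induction n using Nat.strong_induction_on with
    | _ n IH =>
      intro p hp hdeg
      by_cases hsmall : p.natDegree < d
      · exact hconst p hp hsmall
      · push_neg at hsmall
        obtain ⟨g, r, hg, hr, heq, hlt⟩ :=
          division hL hX w p hwInv (hwdeg ▸ hd0) hp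
        have hw0 : w ≠ 0 := fun h => by
          rw [h] at hwdeg; simp at hwdeg; omega
        have hg0 : g ≠ 0 := by
          intro h
          rw [h, mul_zero, zero_add] at heq
          have : p.natDegree < d := by
            rcases eq_or_ne p 0 with h' | h'
            · rw [h', Polynomial.natDegree_zero]; exact hd0
            · have : p.degree < w.degree := heq ▸ hlt
              have := Polynomial.natDegree_lt_natDegree h' this
              omega
          omega
        have hdegp : p.natDegree = w.natDegree + g.natDegree := by
          have h1 : (w * g).degree = w.degree + g.degree := Polynomial.degree_mul
          have h2 : r.degree < (w * g).degree := by
            rw [h1]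
            refine lt_of_lt_of_le hlt ?_
            exact le_add_of_nonneg_right (Polynomial.zero_le_degree_iff.mpr hg0)
          have h3 : p.degree = (w * g).degree := by
            rw [heq]
            exact Polynomial.degree_add_eq_left_of_degree_lt h2
          have h4 : p.natDegree = (w * g).natDegree := by
            have hwg0 : w * g ≠ 0 := mul_ne_zero hw0 hg0
            rw [Polynomial.natDegree, Polynomial.natDegree, h3]
          rw [h4, Polynomial.natDegree_mul hw0 hg0]
        have hglt : g.natDegree < n := by
          have : g.natDegree < p.natDegree := by omega
          omega
        have hgK : ι g ∈ K := IH g.natDegree (by omega) g hg le_rfl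
        have hrK : ι r ∈ K := by
          apply hconst r hr
          rcases eq_or_ne r 0 with h' | h'
          · rw [h', Polynomial.natDegree_zero]; exact hd0
          · have := Polynomial.natDegree_lt_natDegree h' hlt
            omega
        have hwK : ι w ∈ K := Subfield.subset_closure (Or.inr rfl)
        have : ι p = ι w * ι g + ι r := by rw [heq, map_add, map_mul]
        rw [this]
        exact K.add_mem (K.mul_mem hwK hgK) hrK
  -- conclude
  apply le_antisymm
  · -- fixed field ⊆ K
    intro f hf
    have hffix : ∀ σ : G, σ • f = f := (hmemF f).mp hf
    set rr := f.denom with hrr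
    have hr0 : ι rr ≠ 0 := RatFunc.algebraMap_ne_zero (RatFunc.denom_ne_zero f)
    set Q := ∏ τ : G, phi hL hX τ rr with hQdef
    have hQι : ι Q = ∏ τ : G, τ • (ι rr) := by
      rw [hQdef, map_prod]
      exact Finset.prod_congr rfl fun τ _ => (key hL hX τ rr).symm
    have hQfix : ∀ σ : G, σ • ι Q = ι Q := by
      intro σ; rw [hQι]; exact smul_prod_smul σ _
    have hQ0 : ι Q ≠ 0 := by
      rw [hQι]
      apply Finset.prod_ne_zero_iff.mpr
      intro τ _ h0
      apply hr0
      have := congrArg (fun y => τ⁻¹ • y) h0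
      simpa [smul_smul] using this
    set P := f.num * ∏ τ ∈ Finset.univ.erase (1 : G), phi hL hX τ rr with hPdef
    have hPι : ι P = f * ι Q := by
      have hsplit : ∏ τ : G, τ • (ι rr) =
          (ι rr) * ∏ τ ∈ Finset.univ.erase (1 : G), τ • (ι rr) := by
        rw [← Finset.mul_prod_erase Finset.univ _ (Finset.mem_univ (1 : G)), one_smul]
      have hM : (ι (∏ τ ∈ Finset.univ.erase (1 : G), phi hL hX τ rr) : RatFunc L) =
          ∏ τ ∈ Finset.univ.erase (1 : G), τ • (ι rr) := by
        rw [map_prod]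
        exact Finset.prod_congr rfl fun τ _ => (key hL hX τ rr).symm
      have hfnum : f * ι rr = ι f.num := by
        have h := RatFunc.num_div_denom f
        rw [div_eq_iff hr0] at h
        exact h.symm
      rw [hPdef, map_mul, hM, hQι, hsplit, ← mul_assoc, hfnum]
    have hPfix : ∀ σ : G, σ • ι P = ι P := by
      intro σ
      rw [hPι, smul_mul', hffix σ, hQfix σ]
    have hfPQ : f = ι P * (ι Q)⁻¹ := by
      rw [hPι]
      field_simp
    rw [hfPQ]
    exact K.mul_mem (hgen _ P hPfix le_rfl) (K.inv_mem (hgen _ Q hQfix le_rfl))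
  · -- K ⊆ fixed field
    rw [hKdef, Subfield.closure_le]
    rintro y (⟨-, hy⟩ | rfl)
    · exact hy
    · rw [SetLike.mem_coe, hmemF]
      exact hwInv
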